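/- Let L be an e-cyclic residuated lattice and a, b ∈ L. Then C[a] ∩ C[b] = C[|a| ∨ |b|], and C[C[a] ∪ C[b]] = C[|a| ∧ |b|] = C[|a|·|b|]. (Here C[C[a] ∪ C[b]] is the join of C[a] and C[b] in the lattice of convex subalgebras ordered by inclusion.) -/
import Mathlib


universe u

/-- A residuated lattice: a lattice-ordered monoid with left and right residuals.
`ldiv x z` is `x \ z` and `rdiv z y` is `z / y`. -/
class ResiduatedLattice (α : Type u) extends Lattice α, Monoid α where
  ldiv : α → α → α
  rdiv : α → α → α
  mul_le_iff_le_ldiv : ∀ x y z : α, x * y ≤ z ↔ y ≤ ldiv x z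
  mul_le_iff_le_rdiv : ∀ x y z : α, x * y ≤ z ↔ x ≤ rdiv z y

namespace ResiduatedLattice

variable {α : Type u} [ResiduatedLattice α]

/-- `L` is e-cyclic if `x \ e = e / x` for all `x`. -/
def ECyclic (α : Type u) [ResiduatedLattice α] : Prop :=
  ∀ x : α, ldiv x 1 = rdiv 1 x

/-- Absolute value: `|x| = x ⊓ (e / x) ⊓ e`. -/
def absv (x : α) : α := x ⊓ rdiv 1 x ⊓ 1

/-- A convex subalgebra: contains `e`, closed under all the operations, and order-convex. -/
structure IsConvexSubalgebra (H : Set α) : Prop where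
  one_mem : (1 : α) ∈ H
  mul_mem : ∀ ⦃x⦄, x ∈ H → ∀ ⦃y⦄, y ∈ H → x * y ∈ H
  sup_mem : ∀ ⦃x⦄, x ∈ H → ∀ ⦃y⦄, y ∈ H → x ⊔ y ∈ H
  inf_mem : ∀ ⦃x⦄, x ∈ H → ∀ ⦃y⦄, y ∈ H → x ⊓ y ∈ H
  ldiv_mem : ∀ ⦃x⦄, x ∈ H → ∀ ⦃y⦄, y ∈ H → ldiv x y ∈ H
  rdiv_mem : ∀ ⦃x⦄, x ∈ H → ∀ ⦃y⦄, y ∈ H → rdiv x y ∈ H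
  convex : ∀ ⦃a⦄, a ∈ H → ∀ ⦃b⦄, b ∈ H → ∀ ⦃x⦄, a ≤ x → x ≤ b → x ∈ H

/-- `C[S]`: the smallest convex subalgebra containing `S`. -/
def convexClosure (S : Set α) : Set α :=
  ⋂₀ {H : Set α | IsConvexSubalgebra H ∧ S ⊆ H}

end ResiduatedLattice

open ResiduatedLattice

namespace ResiduatedLattice

variable {α : Type u} [ResiduatedLattice α]

lemma rdiv_mul_le (z y : α) : rdiv z y * y ≤ z := (mul_le_iff_le_rdiv _ _ _).2 le_rfl
lemma mul_ldiv_le (x z : α) : x * ldiv x z ≤ z := (mul_le_iff_le_ldiv _ _ _).2 le_rfl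

lemma mul_le_mul'' {x x' y y' : α} (h1 : x ≤ x') (h2 : y ≤ y') : x * y ≤ x' * y' := by
  have h3 : x * y ≤ x' * y :=
    (mul_le_iff_le_rdiv _ _ _).2 (h1.trans ((mul_le_iff_le_rdiv _ _ _).1 le_rfl))
  have h4 : x' * y ≤ x' * y' :=
    (mul_le_iff_le_ldiv _ _ _).2 (h2.trans ((mul_le_iff_le_ldiv _ _ _).1 le_rfl))
  exact h3.trans h4

lemma rdiv_anti {z y y' : α} (h : y ≤ y') : rdiv z y' ≤ rdiv z y :=
  (mul_le_iff_le_rdiv _ _ _).1 ((mul_le_mul'' le_rfl h).trans (rdiv_mul_le z y'))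

lemma absv_le_one (x : α) : absv x ≤ 1 := inf_le_right
lemma absv_le_self (x : α) : absv x ≤ x := le_trans inf_le_left inf_le_left
lemma absv_le_rdiv (x : α) : absv x ≤ rdiv 1 x := le_trans inf_le_left inf_le_right
lemma absv_mul_self_le_one (x : α) : absv x * x ≤ 1 :=
  (mul_le_iff_le_rdiv _ _ _).2 (absv_le_rdiv x)
lemma self_mul_absv_le_one (hec : ECyclic α) (x : α) : x * absv x ≤ 1 :=
  (mul_le_iff_le_ldiv _ _ _).2 ((absv_le_rdiv x).trans_eq (hec x).symm)

lemma pow_le_one'' {x : α} (hx : x ≤ 1) (n : ℕ) : x ^ n ≤ 1 := by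
  induction n with
  | zero => simp
  | succ n ih =>
    rw [pow_succ]
    calc x ^ n * x ≤ 1 * 1 := mul_le_mul'' ih hx
    _ = 1 := one_mul 1

lemma pow_add_le_left {x : α} (hx : x ≤ 1) (m n : ℕ) : x ^ (m + n) ≤ x ^ m := by
  rw [pow_add]
  calc x ^ m * x ^ n ≤ x ^ m * 1 := mul_le_mul'' le_rfl (pow_le_one'' hx n)
  _ = x ^ m := mul_one _

lemma pow_add_le_right {x : α} (hx : x ≤ 1) (m n : ℕ) : x ^ (m + n) ≤ x ^ n := by
  rw [pow_add]
  calc x ^ m * x ^ n ≤ 1 * x ^ n := mul_le_mul'' (pow_le_one'' hx m) le_rfl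
  _ = x ^ n := one_mul _

lemma mul_sup_le (w y z : α) : w * (y ⊔ z) ≤ w * y ⊔ w * z :=
  (mul_le_iff_le_ldiv _ _ _).2 (sup_le
    ((mul_le_iff_le_ldiv _ _ _).1 le_sup_left)
    ((mul_le_iff_le_ldiv _ _ _).1 le_sup_right))

lemma sup_mul_le (y z w : α) : (y ⊔ z) * w ≤ y * w ⊔ z * w :=
  (mul_le_iff_le_rdiv _ _ _).2 (sup_le
    ((mul_le_iff_le_rdiv _ _ _).1 le_sup_left)
    ((mul_le_iff_le_rdiv _ _ _).1 le_sup_right))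

lemma sup_pow_le {s t : α} (hs : s ≤ 1) (ht : t ≤ 1) :
    ∀ k m n : ℕ, m + n = k → (s ⊔ t) ^ k ≤ s ^ m ⊔ t ^ n := by
  intro k
  induction k with
  | zero =>
    intro m n h
    obtain ⟨rfl, rfl⟩ : m = 0 ∧ n = 0 := by omega
    simp
  | succ k ih =>
    intro m n h
    have hst : s ⊔ t ≤ 1 := sup_le hs ht
    match m, n with
    | 0, n =>
      calc (s ⊔ t) ^ (k + 1) ≤ 1 := pow_le_one'' hst _
      _ = s ^ 0 := (pow_zero s).symm
      _ ≤ s ^ 0 ⊔ t ^ n := le_sup_left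
    | m + 1, 0 =>
      calc (s ⊔ t) ^ (k + 1) ≤ 1 := pow_le_one'' hst _
      _ = t ^ 0 := (pow_zero t).symm
      _ ≤ s ^ (m + 1) ⊔ t ^ 0 := le_sup_right
    | m + 1, n + 1 =>
      rw [pow_succ']
      calc (s ⊔ t) * (s ⊔ t) ^ k ≤ s * (s ⊔ t) ^ k ⊔ t * (s ⊔ t) ^ k :=
            sup_mul_le s t _
      _ ≤ s * (s ^ m ⊔ t ^ (n + 1)) ⊔ t * (s ^ (m + 1) ⊔ t ^ n) :=
            sup_le_sup (mul_le_mul'' le_rfl (ih m (n + 1) (by omega)))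
              (mul_le_mul'' le_rfl (ih (m + 1) n (by omega)))
      _ ≤ (s * s ^ m ⊔ s * t ^ (n + 1)) ⊔ (t * s ^ (m + 1) ⊔ t * t ^ n) :=
            sup_le_sup (mul_sup_le _ _ _) (mul_sup_le _ _ _)
      _ ≤ s ^ (m + 1) ⊔ t ^ (n + 1) := by
            apply sup_le <;> apply sup_le
            · rw [← pow_succ']; exact le_sup_left
            · calc s * t ^ (n + 1) ≤ 1 * t ^ (n + 1) := mul_le_mul'' hs le_rfl
              _ = t ^ (n + 1) := one_mul _
              _ ≤ _ := le_sup_right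
            · calc t * s ^ (m + 1) ≤ 1 * s ^ (m + 1) := mul_le_mul'' ht le_rfl
              _ = s ^ (m + 1) := one_mul _
              _ ≤ _ := le_sup_left
            · rw [← pow_succ']; exact le_sup_right

lemma isConvex_closure (S : Set α) : IsConvexSubalgebra (convexClosure S) := by
  constructor
  · exact fun H hH => hH.1.one_mem
  · exact fun x hx y hy H hH => hH.1.mul_mem (hx H hH) (hy H hH)
  · exact fun x hx y hy H hH => hH.1.sup_mem (hx H hH) (hy H hH)
  · exact fun x hx y hy H hH => hH.1.inf_mem (hx H hH) (hy H hH)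
  · exact fun x hx y hy H hH => hH.1.ldiv_mem (hx H hH) (hy H hH)
  · exact fun x hx y hy H hH => hH.1.rdiv_mem (hx H hH) (hy H hH)
  · exact fun p hp q hq x h1 h2 H hH => hH.1.convex (hp H hH) (hq H hH) h1 h2

lemma subset_convexClosure (S : Set α) : S ⊆ convexClosure S :=
  fun x hx H hH => hH.2 hx

lemma convexClosure_min {S H : Set α} (hH : IsConvexSubalgebra H) (hs : S ⊆ H) :
    convexClosure S ⊆ H :=
  Set.sInter_subset_of_mem ⟨hH, hs⟩

lemma mem_iff_absv_mem {H : Set α} (hH : IsConvexSubalgebra H) (y : α) :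
    y ∈ H ↔ absv y ∈ H := by
  constructor
  · intro hy
    exact hH.inf_mem (hH.inf_mem hy (hH.rdiv_mem hH.one_mem hy)) hH.one_mem
  · intro h
    exact hH.convex h (hH.ldiv_mem h hH.one_mem) (absv_le_self y)
      ((mul_le_iff_le_ldiv _ _ _).1 (absv_mul_self_le_one y))

end ResiduatedLattice

namespace ResiduatedLattice

variable {α : Type u} [ResiduatedLattice α]

/-- The key set `D = {y | ∃ n, x^n ≤ |y|}` for negative `x` is a convex subalgebra. -/
lemma isConvex_D (hec : ECyclic α) {x : α} (hx : x ≤ 1) :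
    IsConvexSubalgebra {y : α | ∃ n : ℕ, x ^ n ≤ absv y} := by
  have habs : ∀ y : α, ∀ u : α, u ≤ y → u ≤ rdiv 1 y → u ≤ 1 → u ≤ absv y := by
    intro y u h1 h2 h3
    exact le_inf (le_inf h1 h2) h3
  constructor
  · -- one_mem
    refine ⟨1, habs 1 _ ?_ ?_ ?_⟩
    · simpa using hx
    · rw [pow_one]
      exact (mul_le_iff_le_rdiv _ _ _).1 (by simpa using hx)
    · simpa using hx
  · -- mul_mem
    rintro y ⟨m, hm⟩ z ⟨n, hn⟩
    refine ⟨m + n, habs _ _ ?_ ?_ (pow_le_one'' hx _)⟩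
    · rw [pow_add]
      exact mul_le_mul'' (hm.trans (absv_le_self y)) (hn.trans (absv_le_self z))
    · rw [add_comm, pow_add]
      refine (mul_le_iff_le_rdiv _ _ _).1 ?_
      calc x ^ n * x ^ m * (y * z) = x ^ n * (x ^ m * y) * z := by
            simp [mul_assoc]
      _ ≤ x ^ n * 1 * z := by
            refine mul_le_mul'' (mul_le_mul'' le_rfl ?_) le_rfl
            exact (mul_le_mul'' hm le_rfl).trans (absv_mul_self_le_one y)
      _ = x ^ n * z := by rw [mul_one]
      _ ≤ absv z * z := mul_le_mul'' hn le_rfl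
      _ ≤ 1 := absv_mul_self_le_one z
  · -- sup_mem
    rintro y ⟨m, hm⟩ z ⟨n, hn⟩
    refine ⟨m + n, habs _ _ ?_ ?_ (pow_le_one'' hx _)⟩
    · exact (pow_add_le_left hx m n).trans
        ((hm.trans (absv_le_self y)).trans le_sup_left)
    · refine (mul_le_iff_le_rdiv _ _ _).1 ((mul_le_iff_le_ldiv _ _ _).2 (sup_le ?_ ?_))
      · refine (mul_le_iff_le_ldiv _ _ _).1 ?_
        calc x ^ (m + n) * y ≤ absv y * y :=
              mul_le_mul'' ((pow_add_le_left hx m n).trans hm) le_rfl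
        _ ≤ 1 := absv_mul_self_le_one y
      · refine (mul_le_iff_le_ldiv _ _ _).1 ?_
        calc x ^ (m + n) * z ≤ absv z * z :=
              mul_le_mul'' ((pow_add_le_right hx m n).trans hn) le_rfl
        _ ≤ 1 := absv_mul_self_le_one z
  · -- inf_mem
    rintro y ⟨m, hm⟩ z ⟨n, hn⟩
    refine ⟨m + n, habs _ _ ?_ ?_ (pow_le_one'' hx _)⟩
    · exact le_inf ((pow_add_le_left hx m n).trans (hm.trans (absv_le_self y)))
        ((pow_add_le_right hx m n).trans (hn.trans (absv_le_self z)))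
    · exact ((pow_add_le_left hx m n).trans (hm.trans (absv_le_rdiv y))).trans
        (rdiv_anti inf_le_left)
  · -- ldiv_mem
    rintro y ⟨m, hm⟩ z ⟨n, hn⟩
    refine ⟨m + n, habs _ _ ?_ ?_ (pow_le_one'' hx _)⟩
    · refine (mul_le_iff_le_ldiv _ _ _).1 ?_
      rw [pow_add, ← mul_assoc]
      calc y * x ^ m * x ^ n ≤ 1 * x ^ n := by
            refine mul_le_mul'' ?_ le_rfl
            exact (mul_le_mul'' le_rfl hm).trans (self_mul_absv_le_one hec y)
      _ = x ^ n := one_mul _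
      _ ≤ z := hn.trans (absv_le_self z)
    · refine (mul_le_iff_le_rdiv _ _ _).1 ?_
      rw [add_comm, pow_add, mul_assoc]
      calc x ^ n * (x ^ m * ldiv y z) ≤ x ^ n * z := by
            refine mul_le_mul'' le_rfl ?_
            exact (mul_le_mul'' (hm.trans (absv_le_self y)) le_rfl).trans (mul_ldiv_le y z)
      _ ≤ absv z * z := mul_le_mul'' hn le_rfl
      _ ≤ 1 := absv_mul_self_le_one z
  · -- rdiv_mem
    rintro y ⟨m, hm⟩ z ⟨n, hn⟩
    refine ⟨m + n, habs _ _ ?_ ?_ (pow_le_one'' hx _)⟩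
    · refine (mul_le_iff_le_rdiv _ _ _).1 ?_
      rw [pow_add, mul_assoc]
      calc x ^ m * (x ^ n * z) ≤ x ^ m * 1 :=
            mul_le_mul'' le_rfl ((mul_le_mul'' hn le_rfl).trans (absv_mul_self_le_one z))
      _ = x ^ m := mul_one _
      _ ≤ y := hm.trans (absv_le_self y)
    · -- x^(m+n) ≤ 1 / (y/z), using e-cyclicity
      refine (mul_le_iff_le_rdiv _ _ _).1 ((mul_le_iff_le_ldiv _ _ _).2 ?_)
      rw [hec (x ^ (m + n))]
      refine (mul_le_iff_le_rdiv _ _ _).1 ?_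
      rw [add_comm, pow_add, ← mul_assoc]
      calc rdiv y z * x ^ n * x ^ m ≤ y * x ^ m := by
            refine mul_le_mul'' ?_ le_rfl
            exact (mul_le_mul'' le_rfl (hn.trans (absv_le_self z))).trans (rdiv_mul_le y z)
      _ ≤ y * absv y := mul_le_mul'' le_rfl hm
      _ ≤ 1 := self_mul_absv_le_one hec y
  · -- convex
    rintro p ⟨m, hm⟩ q ⟨n, hn⟩ w h1 h2
    refine ⟨m + n, habs _ _ ?_ ?_ (pow_le_one'' hx _)⟩
    · exact ((pow_add_le_left hx m n).trans (hm.trans (absv_le_self p))).trans h1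
    · exact ((pow_add_le_right hx m n).trans (hn.trans (absv_le_rdiv q))).trans
        (rdiv_anti h2)

end ResiduatedLattice

namespace ResiduatedLattice

variable {α : Type u} [ResiduatedLattice α]

lemma pow_mem {H : Set α} (hH : IsConvexSubalgebra H) {x : α} (hx : x ∈ H) (n : ℕ) :
    x ^ n ∈ H := by
  induction n with
  | zero => simpa using hH.one_mem
  | succ n ih => rw [pow_succ]; exact hH.mul_mem ih hx

lemma mem_closure_of_absv_infl {H : Set α} (hH : IsConvexSubalgebra H) {x y : α}
    (hx : x ∈ H) (hxy : x ≤ absv y) : y ∈ H := by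
  refine (mem_iff_absv_mem hH y).2 ?_
  exact hH.convex hx hH.one_mem hxy (absv_le_one y)

end ResiduatedLattice

open ResiduatedLattice in
theorem stmt3' {α : Type u} [ResiduatedLattice α] (hec : ECyclic α) (a b : α) :
    convexClosure {a} ∩ convexClosure {b} = convexClosure {absv a ⊔ absv b} ∧
    convexClosure (convexClosure {a} ∪ convexClosure {b}) =
      convexClosure {absv a ⊓ absv b} ∧
    convexClosure (convexClosure {a} ∪ convexClosure {b}) =
      convexClosure {absv a * absv b} := by
  have hCa := isConvex_closure ({a} : Set α)
  have hCb := isConvex_closure ({b} : Set α)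
  have ha : a ∈ convexClosure {a} := subset_convexClosure _ rfl
  have hb : b ∈ convexClosure {b} := subset_convexClosure _ rfl
  have haa : absv a ∈ convexClosure ({a} : Set α) := (mem_iff_absv_mem hCa a).1 ha
  have hbb : absv b ∈ convexClosure ({b} : Set α) := (mem_iff_absv_mem hCb b).1 hb
  -- membership in C[x] implies a power condition
  have key : ∀ x y : α, y ∈ convexClosure {x} → ∃ n : ℕ, absv x ^ n ≤ absv y := by
    intro x y hy
    have hD := isConvex_D (x := absv x) hec (absv_le_one x)
    have hxD : x ∈ {y : α | ∃ n : ℕ, absv x ^ n ≤ absv y} := ⟨1, by rw [pow_one]⟩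
    exact convexClosure_min hD (Set.singleton_subset_iff.2 hxD) hy
  -- part 1
  have part1 : convexClosure {a} ∩ convexClosure {b} =
      convexClosure {absv a ⊔ absv b} := by
    set c := absv a ⊔ absv b with hc
    have hCc := isConvex_closure ({c} : Set α)
    have hcle : c ≤ 1 := sup_le (absv_le_one a) (absv_le_one b)
    apply le_antisymm
    · intro y hy
      obtain ⟨m, hm⟩ := key a y hy.1
      obtain ⟨n, hn⟩ := key b y hy.2
      have hck : c ^ (m + n) ∈ convexClosure ({c} : Set α) :=
        pow_mem hCc (subset_convexClosure _ rfl) (m + n)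
      have hle : c ^ (m + n) ≤ absv y :=
        (sup_pow_le (absv_le_one a) (absv_le_one b) (m + n) m n rfl).trans
          (sup_le hm hn)
      exact mem_closure_of_absv_infl hCc hck hle
    · have h1 : c ∈ convexClosure ({a} : Set α) :=
        hCa.convex haa hCa.one_mem le_sup_left hcle
      have h2 : c ∈ convexClosure ({b} : Set α) :=
        hCb.convex hbb hCb.one_mem le_sup_right hcle
      exact Set.subset_inter
        (convexClosure_min hCa (Set.singleton_subset_iff.2 h1))
        (convexClosure_min hCb (Set.singleton_subset_iff.2 h2))
  -- common facts for parts 2 and 3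
  set d := absv a ⊓ absv b with hd
  have hCd := isConvex_closure ({d} : Set α)
  have hdmem : d ∈ convexClosure ({d} : Set α) := subset_convexClosure _ rfl
  have hadm : absv a ∈ convexClosure ({d} : Set α) :=
    hCd.convex hdmem hCd.one_mem inf_le_left (absv_le_one a)
  have hbdm : absv b ∈ convexClosure ({d} : Set α) :=
    hCd.convex hdmem hCd.one_mem inf_le_right (absv_le_one b)
  have hJ := isConvex_closure (convexClosure ({a} : Set α) ∪ convexClosure {b})
  have haJ : a ∈ convexClosure (convexClosure ({a} : Set α) ∪ convexClosure {b}) :=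
    subset_convexClosure _ (Or.inl ha)
  have hbJ : b ∈ convexClosure (convexClosure ({a} : Set α) ∪ convexClosure {b}) :=
    subset_convexClosure _ (Or.inr hb)
  have part2 : convexClosure (convexClosure ({a} : Set α) ∪ convexClosure {b}) =
      convexClosure {d} := by
    apply le_antisymm
    · refine convexClosure_min hCd (Set.union_subset ?_ ?_)
      · refine convexClosure_min hCd (Set.singleton_subset_iff.2 ?_)
        exact (mem_iff_absv_mem hCd a).2 hadm
      · refine convexClosure_min hCd (Set.singleton_subset_iff.2 ?_)
        exact (mem_iff_absv_mem hCd b).2 hbdm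
    · refine convexClosure_min hJ (Set.singleton_subset_iff.2 ?_)
      exact hJ.inf_mem ((mem_iff_absv_mem hJ a).1 haJ) ((mem_iff_absv_mem hJ b).1 hbJ)
  -- part 3: C[d] = C[|a|·|b|]
  set p := absv a * absv b with hp
  have hCp := isConvex_closure ({p} : Set α)
  have hpmem : p ∈ convexClosure ({p} : Set α) := subset_convexClosure _ rfl
  have hpa : p ≤ absv a := by
    calc p ≤ absv a * 1 := mul_le_mul'' le_rfl (absv_le_one b)
    _ = absv a := mul_one _
  have hpb : p ≤ absv b := by
    calc p ≤ 1 * absv b := mul_le_mul'' (absv_le_one a) le_rfl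
    _ = absv b := one_mul _
  have hap : absv a ∈ convexClosure ({p} : Set α) :=
    hCp.convex hpmem hCp.one_mem hpa (absv_le_one a)
  have hbp : absv b ∈ convexClosure ({p} : Set α) :=
    hCp.convex hpmem hCp.one_mem hpb (absv_le_one b)
  have hdp : convexClosure ({d} : Set α) = convexClosure {p} := by
    apply le_antisymm
    · exact convexClosure_min hCp (Set.singleton_subset_iff.2 (hCp.inf_mem hap hbp))
    · exact convexClosure_min hCd (Set.singleton_subset_iff.2 (hCd.mul_mem hadm hbdm))
  exact ⟨part1, part2, part2.trans hdp⟩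


/-- meets and joins of principal convex subalgebras are principal. -/
theorem stmt3 {α : Type u} [ResiduatedLattice α] (hec : ECyclic α) (a b : α) :
    convexClosure {a} ∩ convexClosure {b} = convexClosure {absv a ⊔ absv b} ∧
    convexClosure (convexClosure {a} ∪ convexClosure {b}) =
      convexClosure {absv a ⊓ absv b} ∧
    convexClosure (convexClosure {a} ∪ convexClosure {b}) =
      convexClosure {absv a * absv b} := stmt3' hec a b
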